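/- Let G be a finite group acting on a set X commuting with a map T : X → X, let H ≤ G, and let x be a periodic point of T with stabilizer G_x = H. Suppose the orbit O_T(x) shortens by a factor 1/k in the quotient, i.e. |O_T(x) ∩ O_G(x)| = k, witnessed by g ∈ G with g(x) = T^m(x) (m = |O_T(x)|/k). Then g normalizes H, g^k ∈ H, and k equals the order of the coset gH in the quotient group N_G(H)/H. In particular, k belongs to the set of orders of elements of N_G(H)/H. -/

import Mathlib

def Torbit {X : Type*} (T : X → X) (x : X) : Set X := {y | ∃ i : ℕ, T^[i] x = y}

theorem stmt_6 {X G : Type*} [Group G] [Fintype G] [MulAction G X]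
    (T : X → X) (hcomm : ∀ (g : G) (y : X), g • T y = T (g • y))
    (H : Subgroup G) (x : X) (hx : x ∈ Function.periodicPts T)
    (hH : MulAction.stabilizer G x = H) (k m : ℕ) (hk0 : 0 < k)
    (hk : (Torbit T x ∩ MulAction.orbit G x).ncard = k)
    (hm : k * m = (Torbit T x).ncard)
    (g : G) (hg : g • x = T^[m] x) :
    ∃ hgN : g ∈ (Subgroup.normalizer (H : Set G)),
      g ^ k ∈ H ∧
      orderOf (QuotientGroup.mk (⟨g, hgN⟩ : (Subgroup.normalizer (H : Set G))) :
          (Subgroup.normalizer (H : Set G)) ⧸ H.subgroupOf (Subgroup.normalizer (H : Set G))) = k ∧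
      ∃ q : (Subgroup.normalizer (H : Set G)) ⧸ H.subgroupOf (Subgroup.normalizer (H : Set G)), orderOf q = k := by
  set n := Function.minimalPeriod T x with hn
  have hnpos : 0 < n := Function.minimalPeriod_pos_of_mem_periodicPts hx
  -- commuting with iterates
  have hcomm' : ∀ (h : G) (i : ℕ) (y : X), h • T^[i] y = T^[i] (h • y) := by
    intro h i
    induction i with
    | zero => intro y; simp
    | succ i ih =>
      intro y
      rw [Function.iterate_succ_apply', Function.iterate_succ_apply', hcomm, ih]
  -- Torbit ncard = n
  have horb : Torbit T x = (fun i => T^[i] x) '' Set.Iio n := by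
    ext y
    constructor
    · rintro ⟨i, rfl⟩
      exact ⟨i % n, Nat.mod_lt _ hnpos, Function.iterate_mod_minimalPeriod_eq⟩
    · rintro ⟨i, _, rfl⟩
      exact ⟨i, rfl⟩
  have hcard : (Torbit T x).ncard = n := by
    rw [horb, Set.ncard_image_of_injOn Function.iterate_injOn_Iio_minimalPeriod]
    rw [← Finset.coe_range, Set.ncard_coe_finset, Finset.card_range]
  have hkm : k * m = n := hm.trans hcard
  have hmpos : 0 < m := by
    rcases Nat.eq_zero_or_pos m with h | h
    · subst h; rw [mul_zero] at hkm; omega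
    · exact h
  -- stabilizer of iterates
  have hstab : ∀ i : ℕ, MulAction.stabilizer G (T^[i] x) = H := by
    intro i
    rw [← hH]
    ext h
    simp only [MulAction.mem_stabilizer_iff]
    rw [hcomm']
    constructor
    · intro hh
      have h2 : T^[i * (n - 1)] (T^[i] (h • x)) = T^[i * (n - 1)] (T^[i] x) := by rw [hh]
      rw [← Function.iterate_add_apply, ← Function.iterate_add_apply] at h2
      obtain ⟨n', hn'⟩ : ∃ n', n = n' + 1 := ⟨n - 1, by omega⟩
      have heq : i * (n - 1) + i = i * n := by
        rw [hn', Nat.add_sub_cancel]; ring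
      have hper : T^[i * (n - 1) + i] x = x := by
        rw [heq]
        exact (Function.isPeriodicPt_minimalPeriod T x).const_mul i
      rw [← hcomm'] at h2
      rw [hper] at h2
      exact h2
    · intro hh; rw [hh]
  have hstabg : MulAction.stabilizer G (g • x) = H := by rw [hg]; exact hstab m
  -- g powers
  have hpow : ∀ j : ℕ, g ^ j • x = T^[j * m] x := by
    intro j
    induction j with
    | zero => simp
    | succ j ih =>
      rw [pow_succ, mul_smul, hg, hcomm', ih, ← Function.iterate_add_apply]
      congr 1
      ring
  have hgN : g ∈ (Subgroup.normalizer (H : Set G)) := by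
    intro h
    constructor
    · intro hh
      rw [← hstabg, SetLike.mem_coe, MulAction.mem_stabilizer_iff, mul_smul, mul_smul, inv_smul_smul]
      have : h • x = x := by rw [← hH] at hh; exact hh
      rw [this]
    · intro hh
      rw [← hstabg, SetLike.mem_coe, MulAction.mem_stabilizer_iff] at hh
      rw [mul_smul, mul_smul, inv_smul_smul] at hh
      have : h • x = x := smul_left_cancel g hh
      rw [← hH]; exact this
  -- g^k ∈ H
  have hgk : g ^ k ∈ H := by
    rw [← hH, MulAction.mem_stabilizer_iff, hpow, hkm]
    exact Function.isPeriodicPt_minimalPeriod T x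
  -- powers in H iff k ∣ j
  have hiff : ∀ j : ℕ, g ^ j ∈ H ↔ k ∣ j := by
    intro j
    rw [← hH, MulAction.mem_stabilizer_iff, hpow]
    constructor
    · intro hj
      have : n ∣ j * m := Function.IsPeriodicPt.minimalPeriod_dvd hj
      rw [← hkm] at this
      exact (Nat.mul_dvd_mul_iff_right hmpos).mp this
    · rintro ⟨c, rfl⟩
      have h2 : k * c * m = n * c := by rw [← hkm]; ring
      rw [h2]
      exact (Function.isPeriodicPt_minimalPeriod T x).mul_const c
  refine ⟨hgN, hgk, ?_, ?_⟩
  · set q : (Subgroup.normalizer (H : Set G)) ⧸ H.subgroupOf (Subgroup.normalizer (H : Set G)) :=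
      QuotientGroup.mk (⟨g, hgN⟩ : (Subgroup.normalizer (H : Set G))) with hq
    have hq1 : ∀ j : ℕ, q ^ j = 1 ↔ g ^ j ∈ H := by
      intro j
      rw [hq, ← QuotientGroup.mk_pow, QuotientGroup.eq_one_iff]
      simp [Subgroup.mem_subgroupOf]
    have hdvd : orderOf q ∣ k := orderOf_dvd_of_pow_eq_one ((hq1 k).mpr hgk)
    have hfin : 0 < orderOf q := by
      have : Finite ((Subgroup.normalizer (H : Set G)) ⧸ H.subgroupOf (Subgroup.normalizer (H : Set G))) := by
        infer_instance
      exact orderOf_pos q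
    have hdvd2 : k ∣ orderOf q := (hiff _).mp ((hq1 _).mp (pow_orderOf_eq_one q))
    exact Nat.dvd_antisymm hdvd hdvd2
  · exact ⟨_, (by
      set q : (Subgroup.normalizer (H : Set G)) ⧸ H.subgroupOf (Subgroup.normalizer (H : Set G)) :=
        QuotientGroup.mk (⟨g, hgN⟩ : (Subgroup.normalizer (H : Set G))) with hq
      have hq1 : ∀ j : ℕ, q ^ j = 1 ↔ g ^ j ∈ H := by
        intro j
        rw [hq, ← QuotientGroup.mk_pow, QuotientGroup.eq_one_iff]
        simp [Subgroup.mem_subgroupOf]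
      have hdvd : orderOf q ∣ k := orderOf_dvd_of_pow_eq_one ((hq1 k).mpr hgk)
      have hdvd2 : k ∣ orderOf q := (hiff _).mp ((hq1 _).mp (pow_orderOf_eq_one q))
      exact Nat.dvd_antisymm hdvd hdvd2)⟩
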